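/- With the hypotheses above (φ unital positive sending C[0,1]_α to C[0,1]_β, connected Borel partition with 0 ∈ X₁, 1 ∈ Xₙ), one has μ₀(X₁) = β μ₁(X₁) + (1−β)/(1−α) and μ₀(Xₙ) = β μ₁(Xₙ) − α(1−β)/(1−α). In particular, if α = β then φ(f)(0) = f(0) and φ(f)(1) = f(1) for all f ∈ C[0,1]. -/

import Mathlib

open ContinuousMap MeasureTheory Filter Topology

noncomputable def ramp (a b : ℝ) : C(unitInterval, ℝ) :=
  ⟨fun x => max 0 (min 1 ((b - x) / (b - a))),
    continuous_const.max (continuous_const.min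
      ((continuous_const.sub continuous_subtype_val).div_const _))⟩

lemma ramp_apply (a b : ℝ) (x : unitInterval) :
    ramp a b x = max 0 (min 1 ((b - x) / (b - a))) := rfl

lemma ramp_nonneg (a b : ℝ) (x : unitInterval) : 0 ≤ ramp a b x := le_max_left _ _
lemma ramp_le_one (a b : ℝ) (x : unitInterval) : ramp a b x ≤ 1 :=
  max_le zero_le_one (min_le_left _ _)

lemma ramp_eq_one (a b : ℝ) (hab : a < b) (x : unitInterval) (hx : (x:ℝ) ≤ a) :
    ramp a b x = 1 := by
  have h : (1:ℝ) ≤ (b - x) / (b - a) := (le_div_iff₀ (by linarith)).2 (by linarith)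
  rw [ramp_apply, min_eq_left h, max_eq_right zero_le_one]

lemma ramp_eq_zero (a b : ℝ) (hab : a < b) (x : unitInterval) (hx : b ≤ (x:ℝ)) :
    ramp a b x = 0 := by
  have h : (b - x) / (b - a) ≤ 0 := div_nonpos_of_nonpos_of_nonneg (by linarith) (by linarith)
  rw [ramp_apply, min_eq_right (h.trans zero_le_one), max_eq_left h]

lemma star_eq {α β : ℝ} (hα1 : α ≠ 1)
    (φ : C(unitInterval, ℝ) →ₗ[ℝ] C(unitInterval, ℝ))
    (hunital : φ 1 = 1)
    (hsub : ∀ f : C(unitInterval, ℝ), f 0 = α * f 1 → φ f 0 = β * φ f 1)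
    (f : C(unitInterval, ℝ)) :
    φ f 0 = β * φ f 1 + (1 - β) / (1 - α) * (f 0 - α * f 1) := by
  set c : ℝ := (f 0 - α * f 1) / (1 - α) with hc
  have h1α : (1:ℝ) - α ≠ 0 := sub_ne_zero.2 (Ne.symm hα1)
  have hcc : c * (1 - α) = f 0 - α * f 1 := div_mul_cancel₀ _ h1α
  have hg : (f - c • (1:C(unitInterval,ℝ))) 0 = α * ((f - c • (1:C(unitInterval,ℝ))) 1) := by
    simp only [ContinuousMap.sub_apply, ContinuousMap.smul_apply, ContinuousMap.one_apply,
      smul_eq_mul, mul_one]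
    nlinarith [hcc]
  have h2 := hsub _ hg
  have hφ : φ (f - c • (1:C(unitInterval,ℝ))) = φ f - c • (1:C(unitInterval,ℝ)) := by
    rw [map_sub, LinearMap.map_smul, hunital]
  rw [hφ] at h2
  simp only [ContinuousMap.sub_apply, ContinuousMap.smul_apply, ContinuousMap.one_apply,
    smul_eq_mul, mul_one] at h2
  have h3 : φ f 0 = β * φ f 1 + (1 - β) * c := by linarith
  rw [h3, hc]; ring

lemma downset_seq (A : Set unitInterval)
    (hdown : ∀ x ∈ A, ∀ y : unitInterval, y ≤ x → y ∈ A)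
    (h0A : (0:unitInterval) ∈ A) (h1A : (1:unitInterval) ∉ A) :
    ∃ a b : ℕ → ℝ, (∀ k, 0 ≤ a k) ∧ (∀ k, a k < b k) ∧ (∀ k, b k ≤ 1) ∧
      (∀ x ∈ A, ∀ᶠ k in atTop, (x:ℝ) ≤ a k) ∧
      (∀ x : unitInterval, x ∉ A → ∀ᶠ k in atTop, b k ≤ (x:ℝ)) := by
  set T := Subtype.val '' A with hT
  have hTne : T.Nonempty := ⟨_, ⟨(0:unitInterval), h0A, rfl⟩⟩
  have hTbdd : BddAbove T := ⟨1, by rintro r ⟨x, -, rfl⟩; exact x.2.2⟩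
  set t := sSup T with htdef
  have ht0 : 0 ≤ t := by
    have h : ((0:unitInterval):ℝ) ∈ T := ⟨_, h0A, rfl⟩
    simpa using le_csSup hTbdd h
  have ht1 : t ≤ 1 := csSup_le hTne (by rintro r ⟨x, -, rfl⟩; exact x.2.2)
  have htm : t ∈ unitInterval := ⟨ht0, ht1⟩
  have hmemA : ∀ x ∈ A, (x:ℝ) ≤ t := fun x hx => le_csSup hTbdd ⟨x, hx, rfl⟩
  have hltA : ∀ x : unitInterval, (x:ℝ) < t → x ∈ A := by
    intro x hx
    obtain ⟨r, hrT, hlt⟩ := exists_lt_of_lt_csSup hTne hx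
    obtain ⟨w, hwA, rfl⟩ := hrT
    exact hdown w hwA x (le_of_lt (by exact_mod_cast hlt))
  have h1k : Tendsto (fun k : ℕ => 1/((k:ℝ)+1)) atTop (𝓝 0) :=
    tendsto_one_div_add_atTop_nhds_zero_nat
  by_cases hc : (⟨t, htm⟩ : unitInterval) ∈ A
  · -- closed case : A = {x | x ≤ t}
    have htlt1 : t < 1 := by
      rcases lt_or_eq_of_le ht1 with h | h
      · exact h
      · exact absurd (by simpa [Subtype.ext_iff, h] using hc) h1A
    refine ⟨fun _ => t, fun k => t + (1-t) * (1/((k:ℝ)+1)), fun k => ht0, ?_, ?_, ?_, ?_⟩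
    · intro k
      have hp : (0:ℝ) < 1/((k:ℝ)+1) := by positivity
      have : 0 < (1-t) * (1/((k:ℝ)+1)) := mul_pos (by linarith) hp
      linarith
    · intro k
      have h1 : (1:ℝ)/((k:ℝ)+1) ≤ 1 := by
        rw [div_le_one (by positivity)]; linarith [Nat.cast_nonneg (α := ℝ) k]
      nlinarith
    · intro x hx
      exact Eventually.of_forall fun k => hmemA x hx
    · intro x hx
      have hxt : t < (x:ℝ) := by
        rcases lt_trichotomy (x:ℝ) t with h | h | h
        · exact absurd (hltA x h) hx
        · exact absurd (by simpa [Subtype.ext_iff, ← h] using hc) hx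
        · exact h
      have := (by simpa using h1k.const_mul (1-t) : Tendsto (fun k : ℕ => (1-t) * (1/((k:ℝ)+1))) atTop (𝓝 0)).eventually_lt_const (show (0:ℝ) < (x:ℝ) - t by linarith)
      simpa only [mul_zero] using this.mono fun k hk => by linarith
  · -- open case : A = {x | x < t}
    have htpos : 0 < t := by
      rcases lt_or_eq_of_le ht0 with h | h
      · exact h
      · exact absurd (by simpa [Subtype.ext_iff, ← h] using h0A) hc
    refine ⟨fun k => t - t * (1/((k:ℝ)+1)), fun _ => t, ?_, ?_, fun _ => ht1, ?_, ?_⟩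
    · intro k
      have h1 : (1:ℝ)/((k:ℝ)+1) ≤ 1 := by
        rw [div_le_one (by positivity)]; linarith [Nat.cast_nonneg (α := ℝ) k]
      nlinarith
    · intro k
      have : 0 < t * (1/((k:ℝ)+1)) := by positivity
      linarith
    · intro x hx
      have hxt : (x:ℝ) < t := by
        rcases lt_or_eq_of_le (hmemA x hx) with h | h
        · exact h
        · exact absurd (show (⟨t,htm⟩:unitInterval) ∈ A by simpa [Subtype.ext_iff, ← h] using hx) hc
      have := (by simpa using h1k.const_mul t : Tendsto (fun k : ℕ => t * (1/((k:ℝ)+1))) atTop (𝓝 0)).eventually_lt_const (show (0:ℝ) < t - (x:ℝ) by linarith)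
      simpa only [mul_zero] using this.mono fun k hk => by linarith
    · intro x hx
      refine Eventually.of_forall fun k => ?_
      by_contra h
      exact hx (hltA x (by linarith [lt_of_not_ge h]))

lemma integral_ramp_tendsto (μ : Measure unitInterval) [IsProbabilityMeasure μ]
    (A : Set unitInterval) (hA : MeasurableSet A) (a b : ℕ → ℝ) (hab : ∀ k, a k < b k)
    (hin : ∀ x ∈ A, ∀ᶠ k in atTop, (x:ℝ) ≤ a k)
    (hout : ∀ x : unitInterval, x ∉ A → ∀ᶠ k in atTop, b k ≤ (x:ℝ)) :
    Tendsto (fun k => ∫ x, ramp (a k) (b k) x ∂μ) atTop (𝓝 ((μ A).toReal)) := by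
  have key := MeasureTheory.tendsto_integral_of_dominated_convergence
    (μ := μ) (F := fun k x => ramp (a k) (b k) x)
    (f := A.indicator (fun _ => (1:ℝ))) (bound := fun _ => (1:ℝ))
    (fun k => ((ramp (a k) (b k)).continuous.aestronglyMeasurable))
    (integrable_const 1)
    (fun k => Eventually.of_forall fun x => by
      rw [Real.norm_eq_abs, abs_le]
      refine ⟨by simpa using (neg_nonpos.mpr zero_le_one).trans (ramp_nonneg (a k) (b k) x), ramp_le_one (a k) (b k) x⟩)
    (Eventually.of_forall fun x => ?_)
  · rwa [integral_indicator_const (1:ℝ) hA, smul_eq_mul, mul_one] at key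
  · by_cases hx : x ∈ A
    · rw [Set.indicator_of_mem hx]
      exact tendsto_const_nhds.congr'
        (((hin x hx).mono fun k hk => (ramp_eq_one _ _ (hab k) x hk).symm))
    · rw [Set.indicator_of_notMem hx]
      exact tendsto_const_nhds.congr'
        (((hout x hx).mono fun k hk => (ramp_eq_zero _ _ (hab k) x hk).symm))

lemma downset_eq {α β : ℝ} (hα : α ∈ Set.Ioo (0:ℝ) 1) (hβ : β ∈ Set.Ioo (0:ℝ) 1)
    (φ : C(unitInterval, ℝ) →ₗ[ℝ] C(unitInterval, ℝ))
    (hunital : φ 1 = 1)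
    (hsub : ∀ f : C(unitInterval, ℝ), f 0 = α * f 1 → φ f 0 = β * φ f 1)
    (μ₀ μ₁ : Measure unitInterval)
    [IsProbabilityMeasure μ₀] [IsProbabilityMeasure μ₁]
    (hμ₀ : ∀ f : C(unitInterval, ℝ), φ f 0 = ∫ t, f t ∂μ₀)
    (hμ₁ : ∀ f : C(unitInterval, ℝ), φ f 1 = ∫ t, f t ∂μ₁)
    (A : Set unitInterval) (hA : MeasurableSet A)
    (hdown : ∀ x ∈ A, ∀ y : unitInterval, y ≤ x → y ∈ A)
    (h0A : (0:unitInterval) ∈ A) (h1A : (1:unitInterval) ∉ A) :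
    (μ₀ A).toReal = β * (μ₁ A).toReal + (1 - β) / (1 - α) := by
  obtain ⟨a, b, ha0, hab, hb1, hin, hout⟩ := downset_seq A hdown h0A h1A
  have h0 := integral_ramp_tendsto μ₀ A hA a b hab hin hout
  have h1 := integral_ramp_tendsto μ₁ A hA a b hab hin hout
  have heq : ∀ k, ∫ x, ramp (a k) (b k) x ∂μ₀
      = β * ∫ x, ramp (a k) (b k) x ∂μ₁ + (1 - β) / (1 - α) := by
    intro k
    have hs := star_eq (ne_of_lt hα.2) φ hunital hsub (ramp (a k) (b k))
    rw [hμ₀, hμ₁] at hs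
    rw [hs, ramp_eq_one _ _ (hab k) 0 (by simpa using ha0 k),
      ramp_eq_zero _ _ (hab k) 1 (by simpa using hb1 k)]
    ring
  have h0' : Tendsto (fun k => β * (∫ x, ramp (a k) (b k) x ∂μ₁) + (1 - β) / (1 - α))
      atTop (𝓝 (β * (μ₁ A).toReal + (1 - β) / (1 - α))) :=
    (h1.const_mul β).add_const _
  exact tendsto_nhds_unique h0 (h0'.congr fun k => (heq k).symm)

lemma toReal_compl (μ : Measure unitInterval) [IsProbabilityMeasure μ]
    {s : Set unitInterval} (hs : MeasurableSet s) :
    (μ sᶜ).toReal = 1 - (μ s).toReal := by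
  rw [prob_compl_eq_one_sub hs, ENNReal.toReal_sub_of_le prob_le_one ENNReal.one_ne_top,
    ENNReal.toReal_one]

lemma toReal_prob_le_one (μ : Measure unitInterval) [IsProbabilityMeasure μ]
    (s : Set unitInterval) : (μ s).toReal ≤ 1 := by
  have := ENNReal.toReal_mono ENNReal.one_ne_top (prob_le_one (μ := μ) (s := s))
  simpa using this

theorem stmt14 (α β : ℝ) (hα : α ∈ Set.Ioo (0 : ℝ) 1) (hβ : β ∈ Set.Ioo (0 : ℝ) 1)
    (φ : C(unitInterval, ℝ) →ₗ[ℝ] C(unitInterval, ℝ))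
    (hunital : φ 1 = 1)
    (hpos : ∀ f : C(unitInterval, ℝ), (∀ x, 0 ≤ f x) → ∀ x, 0 ≤ φ f x)
    (hsub : ∀ f : C(unitInterval, ℝ), f 0 = α * f 1 → φ f 0 = β * φ f 1)
    (μ₀ μ₁ : Measure unitInterval)
    [IsProbabilityMeasure μ₀] [IsProbabilityMeasure μ₁]
    (hμ₀ : ∀ f : C(unitInterval, ℝ), φ f 0 = ∫ t, f t ∂μ₀)
    (hμ₁ : ∀ f : C(unitInterval, ℝ), φ f 1 = ∫ t, f t ∂μ₁)
    (n : ℕ) (hn : 2 ≤ n) (X : Fin n → Set unitInterval)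
    (hmeas : ∀ i, MeasurableSet (X i))
    (hconn : ∀ i, IsConnected (X i))
    (hdisj : Pairwise (Function.onFun Disjoint X))
    (hcover : ⋃ i, X i = Set.univ)
    (h0 : (0 : unitInterval) ∈ X ⟨0, by omega⟩)
    (h1 : (1 : unitInterval) ∈ X ⟨n - 1, by omega⟩) :
    (μ₀ (X ⟨0, by omega⟩)).toReal =
      β * (μ₁ (X ⟨0, by omega⟩)).toReal + (1 - β) / (1 - α) ∧
    (μ₀ (X ⟨n - 1, by omega⟩)).toReal =
      β * (μ₁ (X ⟨n - 1, by omega⟩)).toReal - α * (1 - β) / (1 - α) ∧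
    (α = β → ∀ f : C(unitInterval, ℝ), φ f 0 = f 0 ∧ φ f 1 = f 1) := by
  have hα1 : (1:ℝ) - α ≠ 0 := sub_ne_zero.2 (ne_of_gt (by linarith [hα.2]))
  set i0 : Fin n := ⟨0, by omega⟩ with hi0
  set i1 : Fin n := ⟨n - 1, by omega⟩ with hi1
  have hne : i0 ≠ i1 := by
    simp only [hi0, hi1, Ne, Fin.mk.injEq]
    omega
  have hd : Disjoint (X i0) (X i1) := hdisj hne
  have h1notin : (1 : unitInterval) ∉ X i0 := fun h => (Set.disjoint_left.mp hd h) h1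
  have h0notin : (0 : unitInterval) ∉ X i1 := fun h => (Set.disjoint_left.mp hd h0) h
  have down0 : ∀ x ∈ X i0, ∀ y : unitInterval, y ≤ x → y ∈ X i0 := by
    intro x hx y hy
    exact (hconn i0).isPreconnected.Icc_subset h0 hx ⟨by exact_mod_cast y.2.1, hy⟩
  have up1 : ∀ x ∈ X i1, ∀ y : unitInterval, x ≤ y → y ∈ X i1 := by
    intro x hx y hy
    exact (hconn i1).isPreconnected.Icc_subset hx h1 ⟨hy, by exact_mod_cast y.2.2⟩
  have part1 : (μ₀ (X i0)).toReal = β * (μ₁ (X i0)).toReal + (1 - β) / (1 - α) :=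
    downset_eq hα hβ φ hunital hsub μ₀ μ₁ hμ₀ hμ₁ (X i0) (hmeas i0) down0 h0 h1notin
  have part2 : (μ₀ (X i1)).toReal = β * (μ₁ (X i1)).toReal - α * (1 - β) / (1 - α) := by
    have hdc : ∀ x ∈ (X i1)ᶜ, ∀ y : unitInterval, y ≤ x → y ∈ (X i1)ᶜ :=
      fun x hx y hy hyA => hx (up1 y hyA x hy)
    have hcc := downset_eq hα hβ φ hunital hsub μ₀ μ₁ hμ₀ hμ₁ ((X i1)ᶜ)
      (hmeas i1).compl hdc h0notin (fun h => h h1)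
    rw [toReal_compl μ₀ (hmeas i1), toReal_compl μ₁ (hmeas i1)] at hcc
    have harith : (1:ℝ) - β - (1 - β) / (1 - α) = -(α * (1 - β) / (1 - α)) := by
      field_simp
      ring
    linarith [harith]
  refine ⟨part1, part2, ?_⟩
  rintro rfl f
  have key3 : ∀ A : Set unitInterval, MeasurableSet A →
      (∀ x ∈ A, ∀ y : unitInterval, y ≤ x → y ∈ A) →
      (0:unitInterval) ∈ A → (1:unitInterval) ∉ A → μ₁ A = 0 ∧ μ₀ Aᶜ = 0 := by
    intro A hA hdownA h0A h1A
    have heq := downset_eq hα hβ φ hunital hsub μ₀ μ₁ hμ₀ hμ₁ A hA hdownA h0A h1A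
    rw [div_self hα1] at heq
    have hle := toReal_prob_le_one μ₀ A
    have h1nn : 0 ≤ (μ₁ A).toReal := ENNReal.toReal_nonneg
    have hm1 : (μ₁ A).toReal = 0 := by nlinarith [hα.1]
    rw [hm1, mul_zero, zero_add] at heq
    constructor
    · exact (ENNReal.toReal_eq_zero_iff _).mp hm1 |>.resolve_right (measure_ne_top μ₁ A)
    · have : (μ₀ Aᶜ).toReal = 0 := by rw [toReal_compl μ₀ hA, heq]; ring
      exact (ENNReal.toReal_eq_zero_iff _).mp this |>.resolve_right (measure_ne_top μ₀ Aᶜ)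
  -- sets
  have hAn : ∀ k : ℕ, μ₁ {x : unitInterval | (x:ℝ) < 1/((k:ℝ)+1)} = 0 ∧
      μ₀ {x : unitInterval | (x:ℝ) < 1/((k:ℝ)+1)}ᶜ = 0 := by
    intro k
    have hk0 : (0:ℝ) < 1/((k:ℝ)+1) := by positivity
    have hk1 : 1/((k:ℝ)+1) ≤ 1 := by
      rw [div_le_one (by positivity)]; linarith [Nat.cast_nonneg (α := ℝ) k]
    refine key3 _ (measurableSet_lt (by fun_prop) measurable_const) ?_ ?_ ?_
    · intro x hx y hy
      simp only [Set.mem_setOf_eq] at hx ⊢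
      exact lt_of_le_of_lt (show (y:ℝ) ≤ x from hy) hx
    · show ((0:unitInterval):ℝ) < 1/((k:ℝ)+1)
      exact hk0
    · show ¬ ((1:unitInterval):ℝ) < 1/((k:ℝ)+1)
      simp only [not_lt]
      exact_mod_cast hk1
  have hBn : ∀ k : ℕ, μ₁ {x : unitInterval | (x:ℝ) ≤ 1 - 1/((k:ℝ)+1)} = 0 := by
    intro k
    have hk0 : (0:ℝ) < 1/((k:ℝ)+1) := by positivity
    have hk1 : 1/((k:ℝ)+1) ≤ 1 := by
      rw [div_le_one (by positivity)]; linarith [Nat.cast_nonneg (α := ℝ) k]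
    refine (key3 _ (measurableSet_le (by fun_prop) measurable_const) ?_ ?_ ?_).1
    · intro x hx y hy
      simp only [Set.mem_setOf_eq] at hx ⊢
      exact le_trans (show (y:ℝ) ≤ x from hy) hx
    · show ((0:unitInterval):ℝ) ≤ 1 - 1/((k:ℝ)+1)
      show (0:ℝ) ≤ 1 - 1/((k:ℝ)+1)
      linarith
    · show ¬ ((1:unitInterval):ℝ) ≤ 1 - 1/((k:ℝ)+1)
      show ¬ (1:ℝ) ≤ 1 - 1/((k:ℝ)+1)
      simp only [not_le]
      linarith
  have hμ0zero : μ₀ {x : unitInterval | x ≠ 0} = 0 := by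
    have hU : μ₀ (⋃ k : ℕ, {x : unitInterval | (x:ℝ) < 1/((k:ℝ)+1)}ᶜ) = 0 :=
      measure_iUnion_null fun k => (hAn k).2
    refine measure_mono_null ?_ hU
    intro x hx
    have hxpos : (0:ℝ) < x := lt_of_le_of_ne x.2.1 (fun h => hx (Subtype.ext h.symm))
    obtain ⟨k, hk⟩ := exists_nat_one_div_lt hxpos
    exact Set.mem_iUnion.2 ⟨k, by simp only [Set.mem_compl_iff, Set.mem_setOf_eq, not_lt]; linarith⟩
  have hμ1zero : μ₁ {x : unitInterval | x ≠ 1} = 0 := by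
    have hU : μ₁ (⋃ k : ℕ, {x : unitInterval | (x:ℝ) ≤ 1 - 1/((k:ℝ)+1)}) = 0 :=
      measure_iUnion_null fun k => hBn k
    refine measure_mono_null ?_ hU
    intro x hx
    have hxlt : (x:ℝ) < 1 := lt_of_le_of_ne x.2.2 (fun h => hx (Subtype.ext h))
    obtain ⟨k, hk⟩ := exists_nat_one_div_lt (show (0:ℝ) < 1 - x by linarith)
    exact Set.mem_iUnion.2 ⟨k, by simp only [Set.mem_setOf_eq]; linarith⟩
  constructor
  · rw [hμ₀ f]
    have hae : f =ᵐ[μ₀] fun _ => f 0 := by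
      refine measure_mono_null ?_ hμ0zero
      intro x hx
      simp only [Set.mem_compl_iff, Set.mem_setOf_eq] at hx ⊢
      exact fun h => hx (by rw [h])
    rw [integral_congr_ae hae]
    simp
  · rw [hμ₁ f]
    have hae : f =ᵐ[μ₁] fun _ => f 1 := by
      refine measure_mono_null ?_ hμ1zero
      intro x hx
      simp only [Set.mem_compl_iff, Set.mem_setOf_eq] at hx ⊢
      exact fun h => hx (by rw [h])
    rw [integral_congr_ae hae]
    simp
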